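/- Let n ≥ 1, let ũ₁,…,ũₙ : ℝ → SO⁺(2,1) and x̃₁,…,x̃ₙ : ℝ → ℝ³ be differentiable one-parameter families, and set Uᵢ = ũᵢ·ũᵢ₋₁···ũ₁ (U₀ = 1), gᵢ = Uᵢ⁻¹ = ũ₁⁻¹ũ₂⁻¹···ũᵢ⁻¹ for i = 1,…,n−1, and zᵢ = x̃ᵢ₊₁ − x̃ᵢ for i = 1,…,n−1. Then at every parameter value: Σᵢ₌₁ⁿ η( m( U′ᵢ₋₁Uᵢ₋₁⁻¹ − U′ᵢUᵢ⁻¹ ), x̃ᵢ ) = −Σᵢ₌₁^{n−1} η( m( gᵢ⁻¹g′ᵢ ), zᵢ ) − η( m( (ũₙgₙ₋₁⁻¹)′ · gₙ₋₁ũₙ⁻¹ ), x̃ₙ ), where primes denote derivatives with respect to the parameter. (Part 2 of Lemma 6.1: the change of variables (6.5)–(6.6) brings the one-form Θ to the form (6.7).) -/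

import Mathlib

open Matrix

noncomputable section

attribute [local instance] Matrix.normedAddCommGroup Matrix.normedSpace

/-- The Minkowski metric matrix diag(1,-1,-1). -/
def η3 : Matrix (Fin 3) (Fin 3) ℝ := Matrix.diagonal ![1, -1, -1]

/-- The Minkowski bilinear form on ℝ³. -/
def mink (x y : Fin 3 → ℝ) : ℝ := x 0 * y 0 - x 1 * y 1 - x 2 * y 2

/-- The Minkowski cross product. -/
def crossM (p q : Fin 3 → ℝ) : Fin 3 → ℝ :=
  ![p 1 * q 2 - p 2 * q 1, p 0 * q 2 - p 2 * q 0, p 1 * q 0 - p 0 * q 1]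

/-- The map M : ℝ³ → so(2,1), M(p)q = p ×_η q. -/
def Mmap (p : Fin 3 → ℝ) : Matrix (Fin 3) (Fin 3) ℝ :=
  !![0, -(p 2), p 1; -(p 2), 0, p 0; p 1, -(p 0), 0]

/-- The inverse m : so(2,1) → ℝ³ of M (extracted entrywise). -/
def mser (X : Matrix (Fin 3) (Fin 3) ℝ) : Fin 3 → ℝ := ![X 1 2, X 0 2, -(X 0 1)]

/-- Membership in SO⁺(2,1). -/
def IsSOplus (v : Matrix (Fin 3) (Fin 3) ℝ) : Prop :=
  vᵀ * η3 * v = η3 ∧ v.det = 1 ∧ 0 < v 0 0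

/-- so(2,1) as a set of 3×3 matrices. -/
def IsSO21 (X : Matrix (Fin 3) (Fin 3) ℝ) : Prop := Xᵀ * η3 + η3 * X = 0

/-- The 4×4 Poincaré matrix [[v,x],[0,1]]. -/
def pmat (v : Matrix (Fin 3) (Fin 3) ℝ) (x : Fin 3 → ℝ) : Matrix (Fin 4) (Fin 4) ℝ :=
  Matrix.of fun i j =>
    if hi : (i : ℕ) < 3 then
      if hj : (j : ℕ) < 3 then v ⟨i, hi⟩ ⟨j, hj⟩ else x ⟨i, hi⟩
    else if (j : ℕ) < 3 then 0 else 1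

/-- The 4×4 iso(2,1) matrix [[X,b],[0,0]]. -/
def amat (X : Matrix (Fin 3) (Fin 3) ℝ) (b : Fin 3 → ℝ) : Matrix (Fin 4) (Fin 4) ℝ :=
  Matrix.of fun i j =>
    if hi : (i : ℕ) < 3 then
      if hj : (j : ℕ) < 3 then X ⟨i, hi⟩ ⟨j, hj⟩ else b ⟨i, hi⟩
    else 0

/-- Membership in the Poincaré group ISO⁺(2,1) ⊂ GL₄(ℝ). -/
def IsISO (g : Matrix (Fin 4) (Fin 4) ℝ) : Prop :=
  ∃ v x, IsSOplus v ∧ g = pmat v x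

/-- Membership in the Lie algebra iso(2,1). -/
def IsISOAlg (ξ : Matrix (Fin 4) (Fin 4) ℝ) : Prop :=
  ∃ X b, IsSO21 X ∧ ξ = amat X b

/-- Standard basis vectors of ℝ³. -/
def e3 (a : Fin 3) : Fin 3 → ℝ := Pi.single a 1

/-- The rotation/boost generators Ĵ_a of iso(2,1). -/
def Jhat (a : Fin 3) : Matrix (Fin 4) (Fin 4) ℝ := amat (Mmap (e3 a)) 0

/-- The translation generators P̂_a of iso(2,1). -/
def Phat (a : Fin 3) : Matrix (Fin 4) (Fin 4) ℝ := amat 0 (e3 a)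

/-- The invariant pairing ⟨[[X,b],0],[[Y,c],0]⟩ = η(m X, c) + η(m Y, b) on iso(2,1). -/
def pairIso (ξ ζ : Matrix (Fin 4) (Fin 4) ℝ) : ℝ :=
  mink ![ξ 1 2, ξ 0 2, -(ξ 0 1)] ![ζ 0 3, ζ 1 3, ζ 2 3]
  + mink ![ζ 1 2, ζ 0 2, -(ζ 0 1)] ![ξ 0 3, ξ 1 3, ξ 2 3]

/-- Ordered product U_k(ε) = u_{k-1}(ε)⋯u_0(ε) (with U_0 = 1). -/
def ordProd {n : ℕ} (u : ℕ → ℝ → Matrix (Fin n) (Fin n) ℝ) : ℕ → ℝ → Matrix (Fin n) (Fin n) ℝ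
  | 0 => fun _ => 1
  | k + 1 => fun ε => u k ε * ordProd u k ε


lemma entry_hasDerivAt {f : ℝ → Matrix (Fin 3) (Fin 3) ℝ} {f' : Matrix (Fin 3) (Fin 3) ℝ} {t : ℝ}
    (hf : HasDerivAt f f' t) (i j : Fin 3) :
    HasDerivAt (fun s => f s i j) (f' i j) t :=
  hasDerivAt_pi.mp (hasDerivAt_pi.mp hf i) j

lemma hasDerivAt_matmul {f g : ℝ → Matrix (Fin 3) (Fin 3) ℝ}
    {f' g' : Matrix (Fin 3) (Fin 3) ℝ} {t : ℝ}
    (hf : HasDerivAt f f' t) (hg : HasDerivAt g g' t) :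
    HasDerivAt (fun s => f s * g s) (f' * g t + f t * g') t := by
  refine hasDerivAt_pi.mpr fun i => hasDerivAt_pi.mpr fun j => ?_
  have h : HasDerivAt (fun s => ∑ k : Fin 3, f s i k * g s k j)
      (∑ k : Fin 3, (f' i k * g t k j + f t i k * g' k j)) t :=
    HasDerivAt.fun_sum fun k _ => (entry_hasDerivAt hf i k).mul (entry_hasDerivAt hg k j)
  simpa [Matrix.mul_apply, Matrix.add_apply, Finset.sum_add_distrib] using h

lemma diff_matmul {f g : ℝ → Matrix (Fin 3) (Fin 3) ℝ}
    (hf : Differentiable ℝ f) (hg : Differentiable ℝ g) :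
    Differentiable ℝ (fun s => f s * g s) := fun t =>
  (hasDerivAt_matmul (hf t).hasDerivAt (hg t).hasDerivAt).differentiableAt

lemma diff_entry {f : ℝ → Matrix (Fin 3) (Fin 3) ℝ} (hf : Differentiable ℝ f) (i j : Fin 3) :
    Differentiable ℝ (fun s => f s i j) := fun t =>
  (entry_hasDerivAt (hf t).hasDerivAt i j).differentiableAt

lemma diff_inv {f : ℝ → Matrix (Fin 3) (Fin 3) ℝ}
    (hf : Differentiable ℝ f) (hdet : ∀ t, (f t).det = 1) :
    Differentiable ℝ (fun t => (f t)⁻¹) := by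
  have h : (fun t => (f t)⁻¹) = fun t => (f t).adjugate := by
    funext t
    rw [Matrix.inv_def, hdet t]
    simp
  rw [h]
  have he := diff_entry hf
  refine differentiable_pi.mpr fun i => differentiable_pi.mpr fun j => ?_
  simp only [Matrix.adjugate_fin_three]
  fin_cases i <;> fin_cases j <;>
    simp only [Matrix.cons_val', Matrix.cons_val_zero, Matrix.cons_val_one, Matrix.head_cons,
      Matrix.empty_val', Matrix.cons_val_fin_one, Matrix.head_fin_const, Matrix.cons_val_two,
      Matrix.tail_cons, Matrix.of_apply] <;>
    first
    | exact ((he _ _).mul (he _ _)).sub ((he _ _).mul (he _ _))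
    | exact (((he _ _).mul (he _ _)).neg).add ((he _ _).mul (he _ _))

lemma mul_deriv_inv {f : ℝ → Matrix (Fin 3) (Fin 3) ℝ}
    (hf : Differentiable ℝ f) (hdet : ∀ t, (f t).det = 1) (t : ℝ) :
    f t * deriv (fun s => (f s)⁻¹) t = -(deriv f t * (f t)⁻¹) := by
  have hinv := diff_inv hf hdet
  have h1 : HasDerivAt (fun s => f s * (f s)⁻¹)
      (deriv f t * (f t)⁻¹ + f t * deriv (fun s => (f s)⁻¹) t) t :=
    hasDerivAt_matmul (hf t).hasDerivAt (hinv t).hasDerivAt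
  have h2 : (fun s => f s * (f s)⁻¹) = fun _ => (1 : Matrix (Fin 3) (Fin 3) ℝ) := by
    funext s; exact Matrix.mul_nonsing_inv _ (by simp [hdet s])
  rw [h2] at h1
  have h3 := h1.unique (hasDerivAt_const t 1)
  exact eq_neg_of_add_eq_zero_left (by rw [add_comm]; exact h3)

/-- Lemma 6.1, part 2: the change of variables (6.5)–(6.6) brings the
one-form Θ to the form (6.7). -/
theorem statement1 (n : ℕ) (hn : 1 ≤ n)
    (u : ℕ → ℝ → Matrix (Fin 3) (Fin 3) ℝ) (x : ℕ → ℝ → (Fin 3 → ℝ))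
    (hu : ∀ i < n, Differentiable ℝ (u i))
    (huSO : ∀ i < n, ∀ ε, IsSOplus (u i ε))
    (hx : ∀ i < n, Differentiable ℝ (x i))
    (g : ℕ → ℝ → Matrix (Fin 3) (Fin 3) ℝ)
    (hg : ∀ i ε, g i ε = (ordProd u i ε)⁻¹)
    (z : ℕ → ℝ → (Fin 3 → ℝ))
    (hz : ∀ i ε, z i ε = x (i + 1) ε - x i ε)
    (ε : ℝ) :
    ∑ i ∈ Finset.range n,
      mink (mser (deriv (ordProd u i) ε * (ordProd u i ε)⁻¹
        - deriv (ordProd u (i + 1)) ε * (ordProd u (i + 1) ε)⁻¹)) (x i ε)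
    = -(∑ i ∈ Finset.range (n - 1),
        mink (mser ((g (i + 1) ε)⁻¹ * deriv (g (i + 1)) ε)) (z i ε))
      - mink (mser (deriv (fun ε' => u (n - 1) ε' * (g (n - 1) ε')⁻¹) ε
          * (g (n - 1) ε * (u (n - 1) ε)⁻¹))) (x (n - 1) ε) := by
  obtain ⟨m, rfl⟩ : ∃ m, n = m + 1 := ⟨n - 1, (Nat.succ_pred_eq_of_pos hn).symm⟩
  simp only [Nat.add_sub_cancel]
  have hdetP : ∀ i, i ≤ m + 1 → ∀ t, (ordProd u i t).det = 1 := by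
    intro i
    induction i with
    | zero => intro _ t; simp [ordProd]
    | succ k ih =>
      intro hi t
      have hk : k < m + 1 := hi
      have he : ordProd u (k + 1) t = u k t * ordProd u k t := rfl
      rw [he, Matrix.det_mul, (huSO k hk t).2.1, ih hk.le t, one_mul]
  have hdiffP : ∀ i, i ≤ m + 1 → Differentiable ℝ (ordProd u i) := by
    intro i
    induction i with
    | zero => exact fun _ => differentiable_const _
    | succ k ih =>
      intro hi
      have hk : k < m + 1 := hi
      exact diff_matmul (hu k hk) (ih hk.le)
  set T : ℕ → ℕ → ℝ := fun i j =>
    mink (mser (deriv (ordProd u i) ε * (ordProd u i ε)⁻¹)) (x j ε) with hT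
  have hkey : ∀ k, k ≤ m + 1 →
      (g k ε)⁻¹ * deriv (g k) ε = -(deriv (ordProd u k) ε * (ordProd u k ε)⁻¹) := by
    intro k hk
    have hgk : g k = fun t => (ordProd u k t)⁻¹ := funext fun t => hg k t
    rw [hgk]
    show (ordProd u k ε)⁻¹⁻¹ * deriv (fun t => (ordProd u k t)⁻¹) ε = _
    rw [Matrix.nonsing_inv_nonsing_inv _ (by simp [hdetP k hk ε])]
    exact mul_deriv_inv (hdiffP k hk) (hdetP k hk) ε
  have hLHS : ∀ i ∈ Finset.range (m + 1),
      mink (mser (deriv (ordProd u i) ε * (ordProd u i ε)⁻¹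
        - deriv (ordProd u (i + 1)) ε * (ordProd u (i + 1) ε)⁻¹)) (x i ε)
      = T i i - T (i + 1) i := by
    intro i _
    simp [hT, mink, mser, Matrix.sub_apply]
    ring
  have hRHS : ∀ i ∈ Finset.range m,
      mink (mser ((g (i + 1) ε)⁻¹ * deriv (g (i + 1)) ε)) (z i ε)
      = -(T (i + 1) (i + 1) - T (i + 1) i) := by
    intro i hi
    rw [hkey (i + 1) (by simp at hi; omega), hz]
    simp [hT, mink, mser, Matrix.neg_apply, Pi.sub_apply]
    ring
  have hlast :
      mink (mser (deriv (fun ε' => u m ε' * (g m ε')⁻¹) ε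
          * (g m ε * (u m ε)⁻¹))) (x m ε) = T (m + 1) m := by
    have h1 : (fun ε' => u m ε' * (g m ε')⁻¹) = ordProd u (m + 1) := by
      funext t
      rw [hg, Matrix.nonsing_inv_nonsing_inv _ (by simp [hdetP m (by omega) t])]
      rfl
    have h2 : g m ε * (u m ε)⁻¹ = (ordProd u (m + 1) ε)⁻¹ := by
      rw [hg]
      have he : ordProd u (m + 1) ε = u m ε * ordProd u m ε := rfl
      rw [he, Matrix.mul_inv_rev]
    rw [h1, h2, hT]
  have hT00 : T 0 0 = 0 := by
    have hd : deriv (ordProd u 0) ε = 0 := by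
      have he : ordProd u 0 = fun _ : ℝ => (1 : Matrix (Fin 3) (Fin 3) ℝ) := rfl
      rw [he]; exact deriv_const ε _
    simp [hT, hd, mink, mser]
  rw [Finset.sum_congr rfl hLHS, Finset.sum_congr rfl hRHS, hlast,
    Finset.sum_sub_distrib, Finset.sum_range_succ' (fun i => T i i) m,
    Finset.sum_range_succ (fun i => T (i + 1) i) m, hT00]
  simp only [Finset.sum_neg_distrib, Finset.sum_sub_distrib]
  ring
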